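/- Let λ be a partition of N with exactly 2m parts. The set SSP_λ of multisets A of partitions with at most 2 parts such that the multiset of all parts occurring in A equals λ and A is nested (no pair {ρ,σ} in A interleaves: there is no pair with ρ1 > σ1 ≥ ρ2 > σ2 > 0) is in bijection with the set of plane partitions of N of shape (m, m) whose multiset of entries is exactly the multiset of parts of λ. -/

import Mathlib

open List

/-- count of elements `≥ v` -/
def cnt (v : ℕ) (l : List ℕ) : ℕ := l.countP (fun x => v ≤ x)

lemma cnt_cons (v a : ℕ) (l : List ℕ) :
    cnt v (a :: l) = cnt v l + if v ≤ a then 1 else 0 := by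
  simp [cnt, List.countP_cons]

lemma cnt_le_length (v : ℕ) (l : List ℕ) : cnt v l ≤ l.length :=
  List.countP_le_length

lemma cnt_mono_pred {v w : ℕ} (h : w ≤ v) (l : List ℕ) : cnt v l ≤ cnt w l :=
  List.countP_mono_left (fun a _ hv => by simp only [decide_eq_true_eq] at *; omega)

-- sorted desc: count ≥ j+1 ↔ v ≤ l[j]
lemma le_get_of_cnt {l : List ℕ} (hs : l.Pairwise (· ≥ ·)) {v j : ℕ}
    (hj : j < l.length) (h : j < cnt v l) : v ≤ l[j] := by
  induction l generalizing j with
  | nil => simp at hj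
  | cons a t ih =>
    rcases List.pairwise_cons.mp hs with ⟨ha, ht⟩
    cases j with
    | zero =>
      simp only [getElem_cons_zero]
      by_contra hv
      push_neg at hv
      have : cnt v (a :: t) = 0 := by
        simp only [cnt, List.countP_eq_zero]
        intro x hx
        simp only [decide_eq_true_eq]
        rcases List.mem_cons.mp hx with rfl | hx
        · omega
        · have := ha x hx; omega
      omega
    | succ j =>
      simp only [getElem_cons_succ]
      have hj' : j < t.length := by simpa using hj
      refine ih ht hj' ?_
      rw [cnt_cons] at h; split at h <;> omega

lemma cnt_of_le_get {l : List ℕ} (hs : l.Pairwise (· ≥ ·)) {v j : ℕ}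
    (hj : j < l.length) (h : v ≤ l[j]) : j < cnt v l := by
  induction l generalizing j with
  | nil => simp at hj
  | cons a t ih =>
    rcases List.pairwise_cons.mp hs with ⟨ha, ht⟩
    cases j with
    | zero =>
      simp only [getElem_cons_zero] at h
      rw [cnt_cons, if_pos h]; omega
    | succ j =>
      simp only [getElem_cons_succ] at h
      have hj' : j < t.length := by simpa using hj
      have := ih ht hj' h
      have hva : v ≤ a := le_trans h (ha _ (List.getElem_mem hj'))
      rw [cnt_cons, if_pos hva]; omega

lemma eq_of_perm_of_sorted' {α : Type*} {r : α → α → Prop} [Std.Antisymm r] {l₁ l₂ : List α}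
    (hp : l₁ ~ l₂) (h1 : l₁.Pairwise r) (h2 : l₂.Pairwise r) : l₁ = l₂ :=
  hp.eq_of_pairwise' h1 h2

def build : List ℕ → List ℕ → List (ℕ × ℕ)
  | [], _ => []
  | t :: ts, bs =>
    let b := (bs.filter (fun x => x ≤ t)).headD 0
    (t, b) :: build ts (bs.erase b)

structure BInv (ts bs : List ℕ) : Prop where
  hts : ts.Pairwise (· ≤ ·)
  hbs : bs.Pairwise (· ≥ ·)
  hlen : bs.length = ts.length
  hdom : ∀ v, cnt v bs ≤ cnt v ts

lemma headD_mem {l : List ℕ} (h : l ≠ []) (d : ℕ) : l.headD d ∈ l := by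
  cases l with
  | nil => simp at h
  | cons a t => simp

lemma headD_max {l : List ℕ} (hs : l.Pairwise (· ≥ ·)) {x : ℕ} (hx : x ∈ l) (d : ℕ) :
    x ≤ l.headD d := by
  cases l with
  | nil => simp at hx
  | cons a t =>
    rcases List.mem_cons.mp hx with rfl | hx
    · simp
    · exact (List.pairwise_cons.mp hs).1 x hx

section step
variable {t : ℕ} {ts bs : List ℕ} (hI : BInv (t :: ts) bs)
include hI

lemma filter_ne_nil : bs.filter (fun x => x ≤ t) ≠ [] := by
  intro hemp
  have h1 : ∀ x ∈ bs, t + 1 ≤ x := by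
    intro x hx
    have := List.filter_eq_nil_iff.mp hemp x hx
    simp only [decide_eq_true_eq] at this; omega
  have h2 : cnt (t+1) bs = bs.length := by
    simp only [cnt]
    rw [List.countP_eq_length]
    intro x hx; simpa using h1 x hx
  have h3 := hI.hdom (t+1)
  rw [h2, hI.hlen] at h3
  rw [cnt_cons, if_neg (by omega)] at h3
  have := cnt_le_length (t+1) ts
  simp at h3; omega

lemma b_mem : ((bs.filter (fun x => x ≤ t)).headD 0) ∈ bs :=
  List.mem_of_mem_filter (headD_mem (filter_ne_nil hI) 0)

lemma b_le : ((bs.filter (fun x => x ≤ t)).headD 0) ≤ t := by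
  have := List.of_mem_filter (headD_mem (filter_ne_nil hI) 0)
  simpa using this

lemma b_max : ∀ x ∈ bs, x ≤ t → x ≤ (bs.filter (fun x => x ≤ t)).headD 0 := by
  intro x hx hxt
  have hxf : x ∈ bs.filter (fun x => x ≤ t) := List.mem_filter.mpr ⟨hx, by simpa using hxt⟩
  exact headD_max (hI.hbs.sublist (List.filter_sublist)) hxf 0

lemma inv_step : BInv ts (bs.erase ((bs.filter (fun x => x ≤ t)).headD 0)) := by
  set b := (bs.filter (fun x => x ≤ t)).headD 0 with hb
  have hbm : b ∈ bs := b_mem hI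
  have hbt : b ≤ t := b_le hI
  have hperm : bs ~ b :: bs.erase b := List.perm_cons_erase hbm
  constructor
  · exact (List.pairwise_cons.mp hI.hts).2
  · exact hI.hbs.sublist (List.erase_sublist)
  · rw [List.length_erase_of_mem hbm, hI.hlen]; rfl
  · intro v
    have hcnt : cnt v bs = cnt v (bs.erase b) + (if v ≤ b then 1 else 0) := by
      have h := hperm.countP_eq (fun x => v ≤ x)
      rw [cnt, h, List.countP_cons]
      simp only [decide_eq_true_eq, cnt]
    have hdom := hI.hdom v
    rw [cnt_cons] at hdom
    by_cases hvb : v ≤ b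
    · rw [if_pos hvb] at hcnt
      rw [if_pos (le_trans hvb hbt)] at hdom
      omega
    · rw [if_neg hvb] at hcnt
      by_cases hvt : v ≤ t
      · -- b < v ≤ t : all elements ≥ v in bs are > t
        have key : cnt v bs ≤ cnt (t+1) bs := by
          apply List.countP_mono_left
          intro x hx hvx
          simp only [decide_eq_true_eq] at *
          by_contra hxt
          have := b_max hI x hx (by omega)
          omega
        have h2 := hI.hdom (t+1)
        rw [cnt_cons, if_neg (by omega)] at h2
        have h3 : cnt (t+1) ts ≤ cnt v ts := cnt_mono_pred (by omega) ts
        omega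
      · rw [if_neg hvt] at hdom; omega

end step

lemma build_map_fst : ∀ (ts bs : List ℕ), (build ts bs).map Prod.fst = ts
  | [], _ => rfl
  | t :: ts, bs => by
    simp only [build, List.map_cons, build_map_fst ts]

lemma build_map_snd : ∀ {ts bs : List ℕ}, BInv ts bs → (build ts bs).map Prod.snd ~ bs := by
  intro ts
  induction ts with
  | nil =>
    intro bs hI
    have : bs = [] := List.length_eq_zero_iff.mp (by rw [hI.hlen]; rfl)
    subst this; simp [build]
  | cons t ts ih =>
    intro bs hI
    simp only [build, List.map_cons]
    refine List.Perm.trans (List.Perm.cons _ (ih (inv_step hI))) ?_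
    exact (List.perm_cons_erase (b_mem hI)).symm

lemma build_snd_le_fst : ∀ {ts bs : List ℕ}, BInv ts bs → ∀ p ∈ build ts bs, p.2 ≤ p.1 := by
  intro ts
  induction ts with
  | nil => intro bs _ p hp; simp [build] at hp
  | cons t ts ih =>
    intro bs hI p hp
    simp only [build, List.mem_cons] at hp
    rcases hp with rfl | hp
    · exact b_le hI
    · exact ih (inv_step hI) p hp

lemma build_nested : ∀ {ts bs : List ℕ}, BInv ts bs →
    ∀ p ∈ build ts bs, ∀ q ∈ build ts bs, ¬(p.1 > q.1 ∧ q.1 ≥ p.2 ∧ p.2 > q.2) := by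
  intro ts
  induction ts with
  | nil => intro bs _ p hp; simp [build] at hp
  | cons t ts ih =>
    intro bs hI p hp q hq
    set b := (bs.filter (fun x => x ≤ t)).headD 0 with hbdef
    simp only [build, List.mem_cons] at hp hq
    have hIs := inv_step hI
    rcases hp with rfl | hp <;> rcases hq with rfl | hq
    · simp
    · -- p = (t, b), q in tail : q.1 ∈ ts so t ≤ q.1
      have hq1 : q.1 ∈ ts := by
        rw [← build_map_fst ts (bs.erase b)]
        exact List.mem_map_of_mem (f := Prod.fst) hq
      have : t ≤ q.1 := (List.pairwise_cons.mp hI.hts).1 _ hq1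
      rintro ⟨h1, -, -⟩
      simp only at h1; omega
    · -- q = (t, b), p in tail : pattern p.1 > t ≥ p.2 > b impossible
      have hp2 : p.2 ∈ bs.erase b := (build_map_snd hIs).mem_iff.mp (List.mem_map_of_mem (f := Prod.snd) hp)
      have hp2' : p.2 ∈ bs := List.mem_of_mem_erase hp2
      rintro ⟨-, h2, h3⟩
      simp only at h2 h3
      have := b_max hI p.2 hp2' h2
      omega
    · exact ih hIs p hp q hq

lemma coe_tail_eq {t0 : ℕ} {tsr : List ℕ} {s : Multiset ℕ}
    (h : (↑(t0 :: tsr) : Multiset ℕ) = t0 ::ₘ s) : (↑tsr : Multiset ℕ) = s := by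
  have : t0 ::ₘ (↑tsr : Multiset ℕ) = t0 ::ₘ s := by
    rw [← h]; rfl
  exact (Multiset.cons_inj_right t0).mp this

lemma build_eq (A : Multiset (ℕ × ℕ))
    (hv : ∀ p ∈ A, p.2 ≤ p.1)
    (hnest : ∀ p ∈ A, ∀ q ∈ A, ¬(p.1 > q.1 ∧ q.1 ≥ p.2 ∧ p.2 > q.2)) :
    ↑(build ((A.map Prod.fst).sort (· ≤ ·)) ((A.map Prod.snd).sort (· ≥ ·))) = A := by
  induction A using Multiset.strongInductionOn with
  | ih A ih =>
  rcases e : (A.map Prod.fst).sort (· ≤ ·) with _ | ⟨t0, tsr⟩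
  · have h0 : A.map Prod.fst = 0 := by
      rw [← Multiset.sort_eq (A.map Prod.fst) (· ≤ ·), e]; rfl
    have hA : A = 0 := by simpa using h0
    subst hA
    simp [build]
  · set bs := (A.map Prod.snd).sort (· ≥ ·) with hbs
    have hcoe_ts : (↑(t0 :: tsr) : Multiset ℕ) = A.map Prod.fst := by
      rw [← e, Multiset.sort_eq]
    have hts_sorted : (t0 :: tsr).Pairwise (· ≤ ·) := by
      rw [← e]; exact Multiset.pairwise_sort _ _
    have hbs_sorted : bs.Pairwise (· ≥ ·) := Multiset.pairwise_sort _ _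
    have ht0_mem : t0 ∈ A.map Prod.fst := by
      rw [← hcoe_ts]; simp
    have ht0_min : ∀ x ∈ A.map Prod.fst, t0 ≤ x := by
      intro x hx
      rw [← hcoe_ts] at hx
      rcases List.mem_cons.mp hx with rfl | hx
      · exact le_refl _
      · exact (List.pairwise_cons.mp hts_sorted).1 x hx
    -- choose pair r with r.1 = t0 and maximal second component
    obtain ⟨q0, hq0A, hq01⟩ := Multiset.mem_map.mp ht0_mem
    set M := (A.filter (fun p => p.1 = t0)).map Prod.snd with hM
    have hM_ne : M ≠ 0 := by
      intro h
      have hq : q0 ∈ A.filter (fun p => p.1 = t0) := Multiset.mem_filter.mpr ⟨hq0A, hq01⟩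
      rw [hM, Multiset.map_eq_zero] at h
      rw [h] at hq
      simp at hq
    set m0 := (M.sort (· ≥ ·)).headD 0 with hm0
    have hMs_ne : M.sort (· ≥ ·) ≠ [] := by
      intro h
      apply hM_ne
      rw [← Multiset.sort_eq M (· ≥ ·), h]; rfl
    have hm0_mem : m0 ∈ M := by
      rw [← Multiset.mem_sort (· ≥ ·)]
      exact headD_mem hMs_ne 0
    have hm0_max : ∀ x ∈ M, x ≤ m0 := by
      intro x hx
      exact headD_max (Multiset.pairwise_sort _ _) ((Multiset.mem_sort (· ≥ ·)).mpr hx) 0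
    obtain ⟨r, hrF, hr2⟩ := Multiset.mem_map.mp hm0_mem
    have hrA : r ∈ A := (Multiset.mem_filter.mp hrF).1
    have hr1 : r.1 = t0 := by
      have := (Multiset.mem_filter.mp hrF).2
      simpa using this
    -- b0 facts
    set b0 := (bs.filter (fun x => x ≤ t0)).headD 0 with hb0
    have hfil_ne : bs.filter (fun x => x ≤ t0) ≠ [] := by
      intro h
      have hr2bs : r.2 ∈ bs := by
        rw [hbs, Multiset.mem_sort]
        exact Multiset.mem_map_of_mem Prod.snd hrA
      have := List.filter_eq_nil_iff.mp h r.2 hr2bs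
      have hle : r.2 ≤ t0 := hr1 ▸ hv r hrA
      simp [hle] at this
    have hb0f : b0 ∈ bs.filter (fun x => x ≤ t0) := headD_mem hfil_ne 0
    have hb0_mem : b0 ∈ bs := List.mem_of_mem_filter hb0f
    have hb0_le : b0 ≤ t0 := by have := List.of_mem_filter hb0f; simpa using this
    have hb0_max : ∀ x ∈ bs, x ≤ t0 → x ≤ b0 := by
      intro x hx hxt
      exact headD_max (hbs_sorted.sublist (List.filter_sublist))
        (List.mem_filter.mpr ⟨hx, by simpa using hxt⟩) 0
    -- m0 = b0
    have hm0b0 : m0 = b0 := by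
      apply Nat.le_antisymm
      · apply hb0_max
        · rw [hbs, Multiset.mem_sort]
          exact hr2 ▸ Multiset.mem_map_of_mem Prod.snd hrA
        · rw [← hr2, ← hr1]; exact hv r hrA
      · obtain ⟨q, hqA, hq2⟩ := Multiset.mem_map.mp
          (show b0 ∈ A.map Prod.snd by rw [← Multiset.sort_eq (A.map Prod.snd) (· ≥ ·)]; exact hb0_mem)
        by_cases hq1 : q.1 = t0
        · rw [← hq2]
          apply hm0_max
          exact Multiset.mem_map_of_mem Prod.snd (Multiset.mem_filter.mpr ⟨hqA, by simp [hq1]⟩)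
        · have hgt : q.1 > t0 := by
            have := ht0_min q.1 (Multiset.mem_map_of_mem Prod.fst hqA)
            omega
          have := hnest q hqA r hrA
          rw [hr1, hr2, hq2] at this
          push_neg at this
          exact this hgt hb0_le
    have hrval : r = (t0, b0) := by
      ext
      · exact hr1
      · rw [hr2, hm0b0]
    rw [hrval] at hrA
    set A' := A.erase (t0, b0) with hA'
    have hAcons : A = (t0, b0) ::ₘ A' := (Multiset.cons_erase hrA).symm
    have hfstA' : A'.map Prod.fst = ↑tsr := by
      have : A.map Prod.fst = t0 ::ₘ A'.map Prod.fst := by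
        conv_lhs => rw [hAcons]
        simp
      rw [← hcoe_ts] at this
      exact (coe_tail_eq this).symm
    have hsndA' : A'.map Prod.snd = ↑(bs.erase b0) := by
      have h1 : A.map Prod.snd = b0 ::ₘ A'.map Prod.snd := by
        conv_lhs => rw [hAcons]
        simp
      have h2 : (↑bs : Multiset ℕ) = A.map Prod.snd := Multiset.sort_eq _ _
      rw [← Multiset.coe_erase, h2, h1, Multiset.erase_cons_head]
    -- identify recursive sorted lists
    have htsr_eq : (A'.map Prod.fst).sort (· ≤ ·) = tsr := by
      apply eq_of_perm_of_sorted' (r := (· ≤ ·))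
      · apply Multiset.coe_eq_coe.mp
        rw [Multiset.sort_eq, hfstA']
      · exact Multiset.pairwise_sort _ _
      · exact (List.pairwise_cons.mp hts_sorted).2
    have hbsr_eq : (A'.map Prod.snd).sort (· ≥ ·) = bs.erase b0 := by
      apply eq_of_perm_of_sorted' (r := (· ≥ ·))
      · apply Multiset.coe_eq_coe.mp
        rw [Multiset.sort_eq, hsndA']
      · exact Multiset.pairwise_sort _ _
      · exact hbs_sorted.sublist (List.erase_sublist)
    have hstep : build (t0 :: tsr) bs = (t0, b0) :: build tsr (bs.erase b0) := rfl
    have hlt : A' < A := Multiset.erase_lt.mpr hrA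
    have hv' : ∀ p ∈ A', p.2 ≤ p.1 := fun p hp => hv p (Multiset.mem_of_mem_erase hp)
    have hnest' : ∀ p ∈ A', ∀ q ∈ A', ¬(p.1 > q.1 ∧ q.1 ≥ p.2 ∧ p.2 > q.2) :=
      fun p hp q hq => hnest p (Multiset.mem_of_mem_erase hp) q (Multiset.mem_of_mem_erase hq)
    have hrec := ih A' hlt hv' hnest'
    rw [htsr_eq, hbsr_eq] at hrec
    rw [hstep, ← Multiset.cons_coe, hrec, ← hAcons]

lemma bind_pair_eq (A : Multiset (ℕ × ℕ)) :
    (A.bind fun p => ({p.1, p.2} : Multiset ℕ)) = A.map Prod.fst + A.map Prod.snd := by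
  induction A using Multiset.induction_on with
  | empty => simp
  | cons a s ih =>
    rw [Multiset.cons_bind, ih]
    simp only [Multiset.map_cons]
    rw [Multiset.cons_add, Multiset.add_cons]
    rw [show ({a.1, a.2} : Multiset ℕ) = a.1 ::ₘ {a.2} from rfl, Multiset.cons_add,
      Multiset.singleton_add]

lemma card_of_bind {A : Multiset (ℕ × ℕ)} {l : List ℕ} {m : ℕ}
    (hAl : (A.bind fun p => ({p.1, p.2} : Multiset ℕ)) = ↑l) (hlen : l.length = 2 * m) :
    Multiset.card A = m := by
  have := congrArg Multiset.card hAl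
  rw [bind_pair_eq] at this
  simp only [Multiset.card_add, Multiset.card_map, Multiset.coe_card] at this
  omega

lemma ofFn_getD {m : ℕ} {l : List ℕ} (h : l.length = m) :
    List.ofFn (fun j : Fin m => l.getD j 0) = l := by
  subst h
  have : (fun j : Fin l.length => l.getD j 0) = fun j : Fin l.length => l[(j : ℕ)] := by
    funext j
    exact List.getD_eq_getElem l 0 j.isLt
  rw [this, List.ofFn_getElem]

lemma rev_sort (s : Multiset ℕ) : (s.sort (· ≥ ·)).reverse = s.sort (· ≤ ·) := by
  apply eq_of_perm_of_sorted' (r := (· ≤ ·))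
  · apply Multiset.coe_eq_coe.mp
    have : (↑((s.sort (· ≥ ·)).reverse) : Multiset ℕ) = ↑(s.sort (· ≥ ·)) :=
      Multiset.coe_eq_coe.mpr (List.reverse_perm _)
    rw [this, Multiset.sort_eq, Multiset.sort_eq]
  · rw [List.pairwise_reverse]
    exact Multiset.pairwise_sort _ _
  · exact Multiset.pairwise_sort _ _

lemma cnt_ofFn_le {v n : ℕ} (f g : Fin n → ℕ) (h : ∀ j, g j ≤ f j) :
    cnt v (List.ofFn g) ≤ cnt v (List.ofFn f) := by
  induction n with
  | zero => simp [cnt]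
  | succ n ih =>
    rw [List.ofFn_succ, List.ofFn_succ, cnt_cons, cnt_cons]
    have h1 := ih (fun j => f j.succ) (fun j => g j.succ) (fun j => h j.succ)
    have h2 := h 0
    split <;> split <;> omega

lemma card_filter_mono {p q : ℕ × ℕ → Prop} [DecidablePred p] [DecidablePred q]
    (s : Multiset (ℕ × ℕ)) (h : ∀ x ∈ s, p x → q x) :
    Multiset.card (s.filter p) ≤ Multiset.card (s.filter q) := by
  induction s using Multiset.induction_on with
  | empty => simp
  | cons a t ih =>
    rw [Multiset.filter_cons, Multiset.filter_cons]
    have ht := ih (fun x hx => h x (Multiset.mem_cons_of_mem hx))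
    have ha := h a (Multiset.mem_cons_self a t)
    by_cases hp : p a
    · simp only [if_pos hp, if_pos (ha hp), Multiset.card_add, Multiset.card_singleton]
      omega
    · simp only [if_neg hp, zero_add]
      split <;> simp only [Multiset.card_add, Multiset.card_singleton] <;> omega

lemma sorted_desc_getD {l : List ℕ} (hs : l.Pairwise (· ≥ ·)) {j k : ℕ}
    (hj : j ≤ k) (hk : k < l.length) : l[k] ≤ l[j]'(by omega) := by
  rcases Nat.lt_or_ge j k with h | h
  · exact List.pairwise_iff_getElem.mp hs j k (by omega) hk h
  · have : j = k := by omega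
    subst this; exact le_refl _

def toP (m : ℕ) (A : Multiset (ℕ × ℕ)) : Fin 2 → Fin m → ℕ :=
  fun i j =>
    if i = 0 then ((A.map Prod.fst).sort (· ≥ ·)).getD j 0
    else ((A.map Prod.snd).sort (· ≥ ·)).getD j 0

def ofP {m : ℕ} (P : Fin 2 → Fin m → ℕ) : Multiset (ℕ × ℕ) :=
  ↑(build (List.ofFn (P 0)).reverse (List.ofFn (P 1)))

lemma ofFn_toP_zero {m : ℕ} {A : Multiset (ℕ × ℕ)} (hcard : Multiset.card A = m) :
    List.ofFn (toP m A 0) = (A.map Prod.fst).sort (· ≥ ·) := by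
  have h : toP m A 0 = fun j : Fin m => ((A.map Prod.fst).sort (· ≥ ·)).getD j 0 := by
    funext j; simp [toP]
  rw [h, ofFn_getD]
  rw [Multiset.length_sort, Multiset.card_map, hcard]

lemma ofFn_toP_one {m : ℕ} {A : Multiset (ℕ × ℕ)} (hcard : Multiset.card A = m) :
    List.ofFn (toP m A 1) = (A.map Prod.snd).sort (· ≥ ·) := by
  have h : toP m A 1 = fun j : Fin m => ((A.map Prod.snd).sort (· ≥ ·)).getD j 0 := by
    funext j; simp [toP]
  rw [h, ofFn_getD]
  rw [Multiset.length_sort, Multiset.card_map, hcard]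

lemma cnt_eq_card_filter_fst {v : ℕ} (A : Multiset (ℕ × ℕ)) :
    cnt v ((A.map Prod.fst).sort (· ≥ ·)) = Multiset.card (A.filter fun p => v ≤ p.1) := by
  have h1 : cnt v ((A.map Prod.fst).sort (· ≥ ·))
      = Multiset.countP (fun x => v ≤ x) (↑((A.map Prod.fst).sort (· ≥ ·))) := by
    rw [Multiset.coe_countP]; rfl
  rw [h1, Multiset.sort_eq, Multiset.countP_map]

lemma cnt_eq_card_filter_snd {v : ℕ} (A : Multiset (ℕ × ℕ)) :
    cnt v ((A.map Prod.snd).sort (· ≥ ·)) = Multiset.card (A.filter fun p => v ≤ p.2) := by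
  have h1 : cnt v ((A.map Prod.snd).sort (· ≥ ·))
      = Multiset.countP (fun x => v ≤ x) (↑((A.map Prod.snd).sort (· ≥ ·))) := by
    rw [Multiset.coe_countP]; rfl
  rw [h1, Multiset.sort_eq, Multiset.countP_map]

section mainlemmas
variable {m : ℕ} {l : List ℕ}

lemma toP_props {A : Multiset (ℕ × ℕ)} (hlen : l.length = 2 * m)
    (hpos : ∀ x ∈ l, 0 < x)
    (h1 : ∀ p ∈ A, p.2 ≤ p.1 ∧ 0 < p.2)
    (h2 : (A.bind fun p => ({p.1, p.2} : Multiset ℕ)) = (↑l : Multiset ℕ)) :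
    (∀ i j, 0 < toP m A i j) ∧
    (∀ i, ∀ j k : Fin m, j ≤ k → toP m A i k ≤ toP m A i j) ∧
    (∀ j, toP m A 1 j ≤ toP m A 0 j) ∧
    ((↑(List.ofFn (toP m A 0) ++ List.ofFn (toP m A 1)) : Multiset ℕ) = (↑l : Multiset ℕ)) := by
  have hcard : Multiset.card A = m := card_of_bind h2 hlen
  set ts := (A.map Prod.fst).sort (· ≥ ·) with hts
  set bs := (A.map Prod.snd).sort (· ≥ ·) with hbs
  have hlts : ts.length = m := by rw [hts, Multiset.length_sort, Multiset.card_map, hcard]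
  have hlbs : bs.length = m := by rw [hbs, Multiset.length_sort, Multiset.card_map, hcard]
  have hts_sorted : ts.Pairwise (· ≥ ·) := Multiset.pairwise_sort _ _
  have hbs_sorted : bs.Pairwise (· ≥ ·) := Multiset.pairwise_sort _ _
  have htsmem : ∀ x ∈ ts, ∃ p ∈ A, p.1 = x := by
    intro x hx
    have : x ∈ A.map Prod.fst := by
      rw [← Multiset.sort_eq (A.map Prod.fst) (· ≥ ·)]
      exact Multiset.mem_coe.mpr hx
    exact Multiset.mem_map.mp this
  have hbsmem : ∀ x ∈ bs, ∃ p ∈ A, p.2 = x := by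
    intro x hx
    have : x ∈ A.map Prod.snd := by
      rw [← Multiset.sort_eq (A.map Prod.snd) (· ≥ ·)]
      exact Multiset.mem_coe.mpr hx
    exact Multiset.mem_map.mp this
  have hval0 : ∀ j : Fin m, toP m A 0 j = ts[(j : ℕ)]'(by omega) := by
    intro j
    show (if (0 : Fin 2) = 0 then ts.getD j 0 else bs.getD j 0) = _
    rw [if_pos rfl]
    exact List.getD_eq_getElem ts 0 (by omega)
  have hval1 : ∀ j : Fin m, toP m A 1 j = bs[(j : ℕ)]'(by omega) := by
    intro j
    show (if (1 : Fin 2) = 0 then ts.getD j 0 else bs.getD j 0) = _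
    rw [if_neg (by decide)]
    exact List.getD_eq_getElem bs 0 (by omega)
  have hfin2 : ∀ i : Fin 2, i = 0 ∨ i = 1 := by decide
  refine ⟨?_, ?_, ?_, ?_⟩
  · intro i j
    rcases hfin2 i with rfl | rfl
    · rw [hval0 j]
      have hjt : (j : ℕ) < ts.length := by omega
      obtain ⟨p, hpA, hp⟩ := htsmem _ (List.getElem_mem hjt)
      have := h1 p hpA
      omega
    · rw [hval1 j]
      have hjt : (j : ℕ) < bs.length := by omega
      obtain ⟨p, hpA, hp⟩ := hbsmem _ (List.getElem_mem hjt)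
      have := h1 p hpA
      omega
  · intro i j k hjk
    rcases hfin2 i with rfl | rfl
    · rw [hval0 j, hval0 k]
      exact sorted_desc_getD hts_sorted hjk (by omega)
    · rw [hval1 j, hval1 k]
      exact sorted_desc_getD hbs_sorted hjk (by omega)
  · intro j
    rw [hval0 j, hval1 j]
    set v := bs[(j : ℕ)]'(by omega) with hv
    have hc1 : (j : ℕ) < cnt v bs :=
      cnt_of_le_get hbs_sorted (by omega) (le_refl _)
    have hc2 : cnt v bs ≤ cnt v ts := by
      rw [hts, hbs, cnt_eq_card_filter_fst, cnt_eq_card_filter_snd]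
      exact card_filter_mono A (fun p hp hle => le_trans hle (h1 p hp).1)
    exact le_get_of_cnt hts_sorted (by omega) (by omega)
  · rw [ofFn_toP_zero hcard, ofFn_toP_one hcard, ← hts, ← hbs]
    have : (↑(ts ++ bs) : Multiset ℕ) = (↑ts : Multiset ℕ) + ↑bs := by
      rw [← Multiset.coe_add]
    rw [this, hts, hbs, Multiset.sort_eq, Multiset.sort_eq, ← bind_pair_eq, h2]

lemma binv_ofP (P : Fin 2 → Fin m → ℕ)
    (hP2 : ∀ i, ∀ j k : Fin m, j ≤ k → P i k ≤ P i j)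
    (hP3 : ∀ j, P 1 j ≤ P 0 j) :
    BInv (List.ofFn (P 0)).reverse (List.ofFn (P 1)) := by
  have hsorted : ∀ i, (List.ofFn (P i)).Pairwise (· ≥ ·) := by
    intro i
    rw [List.pairwise_ofFn]
    intro j k hjk
    exact hP2 i j k (le_of_lt hjk)
  constructor
  · rw [List.pairwise_reverse]
    exact hsorted 0
  · exact hsorted 1
  · simp
  · intro v
    have h1 : cnt v (List.ofFn (P 0)).reverse = cnt v (List.ofFn (P 0)) :=
      (List.reverse_perm _).countP_eq _
    rw [h1]
    exact cnt_ofFn_le (P 0) (P 1) hP3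

lemma ofP_props (hlen : l.length = 2 * m) (P : Fin 2 → Fin m → ℕ)
    (hP1 : ∀ i j, 0 < P i j)
    (hP2 : ∀ i, ∀ j k : Fin m, j ≤ k → P i k ≤ P i j)
    (hP3 : ∀ j, P 1 j ≤ P 0 j)
    (hP4 : (↑(List.ofFn (P 0) ++ List.ofFn (P 1)) : Multiset ℕ) = (↑l : Multiset ℕ)) :
    (∀ p ∈ ofP P, p.2 ≤ p.1 ∧ 0 < p.2) ∧
    ((ofP P).bind fun p => ({p.1, p.2} : Multiset ℕ)) = (↑l : Multiset ℕ) ∧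
    (∀ p ∈ ofP P, ∀ q ∈ ofP P, ¬(p.1 > q.1 ∧ q.1 ≥ p.2 ∧ p.2 > q.2)) := by
  have hI := binv_ofP P hP2 hP3
  have hfst : (ofP P).map Prod.fst = ↑(List.ofFn (P 0)) := by
    show ((↑(build _ _) : Multiset (ℕ × ℕ)).map Prod.fst) = _
    rw [Multiset.map_coe, build_map_fst]
    exact Multiset.coe_eq_coe.mpr (List.reverse_perm _)
  have hsnd : (ofP P).map Prod.snd = ↑(List.ofFn (P 1)) := by
    show ((↑(build _ _) : Multiset (ℕ × ℕ)).map Prod.snd) = _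
    rw [Multiset.map_coe]
    exact Multiset.coe_eq_coe.mpr (build_map_snd hI)
  refine ⟨?_, ?_, ?_⟩
  · intro p hp
    have hpb : p ∈ build (List.ofFn (P 0)).reverse (List.ofFn (P 1)) := Multiset.mem_coe.mp hp
    constructor
    · exact build_snd_le_fst hI p hpb
    · have : p.2 ∈ (↑(List.ofFn (P 1)) : Multiset ℕ) := by
        rw [← hsnd]
        exact Multiset.mem_map_of_mem Prod.snd hp
      obtain ⟨j, hj⟩ := List.mem_ofFn.mp (Multiset.mem_coe.mp this)
      rw [← hj]
      exact hP1 1 j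
  · rw [bind_pair_eq, hfst, hsnd, Multiset.coe_add]
    exact hP4
  · intro p hp q hq
    exact build_nested hI p (Multiset.mem_coe.mp hp) q (Multiset.mem_coe.mp hq)

lemma ofP_toP {A : Multiset (ℕ × ℕ)} (hlen : l.length = 2 * m)
    (h1 : ∀ p ∈ A, p.2 ≤ p.1 ∧ 0 < p.2)
    (h2 : (A.bind fun p => ({p.1, p.2} : Multiset ℕ)) = (↑l : Multiset ℕ))
    (h3 : ∀ p ∈ A, ∀ q ∈ A, ¬(p.1 > q.1 ∧ q.1 ≥ p.2 ∧ p.2 > q.2)) :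
    ofP (toP m A) = A := by
  have hcard : Multiset.card A = m := card_of_bind h2 hlen
  show (↑(build (List.ofFn (toP m A 0)).reverse (List.ofFn (toP m A 1))) : Multiset (ℕ × ℕ)) = A
  rw [ofFn_toP_zero hcard, ofFn_toP_one hcard, rev_sort]
  exact build_eq A (fun p hp => (h1 p hp).1) h3

lemma toP_ofP (P : Fin 2 → Fin m → ℕ)
    (hP2 : ∀ i, ∀ j k : Fin m, j ≤ k → P i k ≤ P i j)
    (hP3 : ∀ j, P 1 j ≤ P 0 j) :
    toP m (ofP P) = P := by
  have hI := binv_ofP P hP2 hP3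
  have hsorted : ∀ i, (List.ofFn (P i)).Pairwise (· ≥ ·) := by
    intro i
    rw [List.pairwise_ofFn]
    intro j k hjk
    exact hP2 i j k (le_of_lt hjk)
  have hfst : (ofP P).map Prod.fst = ↑(List.ofFn (P 0)) := by
    show ((↑(build _ _) : Multiset (ℕ × ℕ)).map Prod.fst) = _
    rw [Multiset.map_coe, build_map_fst]
    exact Multiset.coe_eq_coe.mpr (List.reverse_perm _)
  have hsnd : (ofP P).map Prod.snd = ↑(List.ofFn (P 1)) := by
    show ((↑(build _ _) : Multiset (ℕ × ℕ)).map Prod.snd) = _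
    rw [Multiset.map_coe]
    exact Multiset.coe_eq_coe.mpr (build_map_snd hI)
  have hsort0 : ((ofP P).map Prod.fst).sort (· ≥ ·) = List.ofFn (P 0) := by
    apply eq_of_perm_of_sorted' (r := (· ≥ ·))
    · apply Multiset.coe_eq_coe.mp
      rw [Multiset.sort_eq, hfst]
    · exact Multiset.pairwise_sort _ _
    · exact hsorted 0
  have hsort1 : ((ofP P).map Prod.snd).sort (· ≥ ·) = List.ofFn (P 1) := by
    apply eq_of_perm_of_sorted' (r := (· ≥ ·))
    · apply Multiset.coe_eq_coe.mp
      rw [Multiset.sort_eq, hsnd]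
    · exact Multiset.pairwise_sort _ _
    · exact hsorted 1
  funext i j
  rcases (by decide : ∀ i : Fin 2, i = 0 ∨ i = 1) i with rfl | rfl
  · show (if (0 : Fin 2) = 0 then _ else _) = _
    rw [if_pos rfl, hsort0, List.getD_eq_getElem _ 0 (by simp), List.getElem_ofFn]
  · show (if (1 : Fin 2) = 0 then _ else _) = _
    rw [if_neg (by decide), hsort1, List.getD_eq_getElem _ 0 (by simp), List.getElem_ofFn]

end mainlemmas

/-- Proposition 3.4: if `λ ⊢ N` has `2m` parts, the nested multisets `A` of two-part
partitions with part-multiset `λ` are in bijection with the plane partitions of `N`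
of shape `(m, m)` whose entries are the parts of `λ`. -/
theorem nested_pairs_equiv_plane_partitions (N m : ℕ) (l : List ℕ)
    (hsort : l.Pairwise (· ≥ ·)) (hpos : ∀ x ∈ l, 0 < x)
    (hsum : l.sum = N) (hlen : l.length = 2 * m) :
    Nonempty (
      {A : Multiset (ℕ × ℕ) //
        (∀ p ∈ A, p.2 ≤ p.1 ∧ 0 < p.2) ∧
        (A.bind fun p => {p.1, p.2}) = (l : Multiset ℕ) ∧
        (∀ p ∈ A, ∀ q ∈ A, ¬(p.1 > q.1 ∧ q.1 ≥ p.2 ∧ p.2 > q.2))}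
      ≃
      {P : Fin 2 → Fin m → ℕ //
        (∀ i j, 0 < P i j) ∧
        (∀ i, ∀ j k : Fin m, j ≤ k → P i k ≤ P i j) ∧
        (∀ j, P 1 j ≤ P 0 j) ∧
        ((List.ofFn (P 0) ++ List.ofFn (P 1) : List ℕ) : Multiset ℕ) = (l : Multiset ℕ)}) := by
  exact ⟨{
    toFun := fun A => ⟨toP m A.1, toP_props hlen hpos A.2.1 A.2.2.1⟩
    invFun := fun P => ⟨ofP P.1, ofP_props hlen P.1 P.2.1 P.2.2.1 P.2.2.2.1 P.2.2.2.2⟩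
    left_inv := fun A => Subtype.ext (ofP_toP hlen A.2.1 A.2.2.1 A.2.2.2)
    right_inv := fun P => Subtype.ext (toP_ofP P.1 P.2.2.1 P.2.2.2.1) }⟩
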